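/- Upper bound for approximation numbers by projecting out columns: for 0 < q ≤ p ≤ ∞ and 1 ≤ n ≤ N², a_n(S_p^N ↪ S_q^N) ≤ ⌈(N² − n + 1)/N⌉^{1/q − 1/p}. In particular a_n(S_p^N ↪ S_q^N) ≲_{p,q} max{1, (N² − n + 1)/N}^{1/q − 1/p}. -/

import Mathlib

open scoped ENNReal

/-- The (unordered) singular values of a real `N × N` matrix `A`:
the square roots of the eigenvalues of `Aᵀ * A`. -/
noncomputable def singularValues (N : ℕ) (A : Matrix (Fin N) (Fin N) ℝ) : Fin N → ℝ :=
  fun i => Real.sqrt ((show (Matrix.transpose A * A).IsHermitian by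
    simpa only [Matrix.conjTranspose_eq_transpose_of_trivial] using
      Matrix.isHermitian_conjTranspose_mul_self A).eigenvalues i)

/-- The Schatten `p`-(quasi-)norm of a real `N × N` matrix, `0 < p ≤ ∞`. -/
noncomputable def schattenNorm (N : ℕ) (p : ℝ≥0∞) (A : Matrix (Fin N) (Fin N) ℝ) : ℝ :=
  if p = ⊤ then ⨆ i, singularValues N A i
  else (∑ i, singularValues N A i ^ p.toReal) ^ (1 / p.toReal)

/-- The `n`-th approximation number of the natural identity `S_p^N → S_q^N`. -/
noncomputable def approxNumber (N : ℕ) (p q : ℝ≥0∞) (n : ℕ) : ℝ :=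
  sInf {r : ℝ | ∃ T : Matrix (Fin N) (Fin N) ℝ →ₗ[ℝ] Matrix (Fin N) (Fin N) ℝ,
    Module.finrank ℝ (LinearMap.range T) < n ∧
    r = sSup {s : ℝ | ∃ A, schattenNorm N p A ≤ 1 ∧ s = schattenNorm N q (A - T A)}}

/-- The `n`-th Gelfand number of the natural identity `S_p^N → S_q^N`. -/
noncomputable def gelfandNumber (N : ℕ) (p q : ℝ≥0∞) (n : ℕ) : ℝ :=
  sInf {r : ℝ | ∃ F : Submodule ℝ (Matrix (Fin N) (Fin N) ℝ),
    N ^ 2 - Module.finrank ℝ F < n ∧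
    r = sSup {s : ℝ | ∃ A ∈ F, schattenNorm N p A ≤ 1 ∧ s = schattenNorm N q A}}

/-- The `n`-th Kolmogorov number of the natural identity `S_p^N → S_q^N`. -/
noncomputable def kolmogorovNumber (N : ℕ) (p q : ℝ≥0∞) (n : ℕ) : ℝ :=
  sInf {r : ℝ | ∃ E : Submodule ℝ (Matrix (Fin N) (Fin N) ℝ),
    Module.finrank ℝ E < n ∧
    r = sSup {s : ℝ | ∃ A, schattenNorm N p A ≤ 1 ∧
      s = sInf {t : ℝ | ∃ B ∈ E, t = schattenNorm N q (A - B)}}}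


section Aux
open scoped RealInnerProductSpace
open Matrix

variable {N : ℕ}

lemma toEuclideanLin_eigen (M : Matrix (Fin N) (Fin N) ℝ) (hM : M.IsHermitian) (j : Fin N) :
    Matrix.toEuclideanLin M (hM.eigenvectorBasis j) = hM.eigenvalues j • hM.eigenvectorBasis j := by
  have h := hM.mulVec_eigenvectorBasis j
  apply (WithLp.equiv 2 (Fin N → ℝ)).injective
  simp only [Matrix.toEuclideanLin_apply, Equiv.apply_symm_apply]
  ext i
  simpa using congrFun h i

lemma repr_toEuclideanLin (M : Matrix (Fin N) (Fin N) ℝ) (hM : M.IsHermitian)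
    (x : EuclideanSpace ℝ (Fin N)) (j : Fin N) :
    hM.eigenvectorBasis.repr (Matrix.toEuclideanLin M x) j
      = hM.eigenvalues j * hM.eigenvectorBasis.repr x j := by
  rw [OrthonormalBasis.repr_apply_apply, OrthonormalBasis.repr_apply_apply]
  have hsym := (Matrix.isHermitian_iff_isSymmetric).1 hM
  rw [← hsym (hM.eigenvectorBasis j) x, toEuclideanLin_eigen M hM j]
  rw [real_inner_smul_left]

/-- quadratic form expansion -/
lemma quad_expand (M : Matrix (Fin N) (Fin N) ℝ) (hM : M.IsHermitian)
    (x : EuclideanSpace ℝ (Fin N)) :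
    ⟪x, Matrix.toEuclideanLin M x⟫
      = ∑ j, hM.eigenvalues j * (hM.eigenvectorBasis.repr x j)^2 := by
  rw [← hM.eigenvectorBasis.repr.inner_map_map x (Matrix.toEuclideanLin M x)]
  rw [PiLp.inner_apply]
  refine Finset.sum_congr rfl fun j _ => ?_
  rw [repr_toEuclideanLin]
  simp [RCLike.inner_apply]
  ring

lemma norm_sq_expand (x : EuclideanSpace ℝ (Fin N)) (b : OrthonormalBasis (Fin N) ℝ (EuclideanSpace ℝ (Fin N))) :
    ‖x‖^2 = ∑ j, (b.repr x j)^2 := by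
  rw [← b.repr.norm_map x, EuclideanSpace.norm_eq]
  rw [Real.sq_sqrt (by positivity)]
  simp [sq_abs]

/-- coordinates vanish off the spanning set -/
lemma repr_eq_zero_of_mem_span (b : OrthonormalBasis (Fin N) ℝ (EuclideanSpace ℝ (Fin N)))
    (S : Set (Fin N)) (x : EuclideanSpace ℝ (Fin N))
    (hx : x ∈ Submodule.span ℝ (b '' S)) (j : Fin N) (hj : j ∉ S) :
    b.repr x j = 0 := by
  rw [OrthonormalBasis.repr_apply_apply]
  induction hx using Submodule.span_induction with
  | mem y hy =>
      obtain ⟨i, hi, rfl⟩ := hy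
      have : i ≠ j := fun h => hj (h ▸ hi)
      have := b.orthonormal.2 (Ne.symm this)
      simpa [real_inner_comm] using this
  | zero => simp
  | add y z _ _ hy hz => rw [inner_add_right, hy, hz]; ring
  | smul a y _ hy => rw [inner_smul_right, hy]; ring

lemma quad_lower (M : Matrix (Fin N) (Fin N) ℝ) (hM : M.IsHermitian) (S : Set (Fin N)) (a : ℝ)
    (x : EuclideanSpace ℝ (Fin N)) (hx : x ∈ Submodule.span ℝ (⇑hM.eigenvectorBasis '' S))
    (ha : ∀ j ∈ S, a ≤ hM.eigenvalues j) :
    a * ‖x‖^2 ≤ ⟪x, Matrix.toEuclideanLin M x⟫ := by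
  rw [quad_expand M hM x, norm_sq_expand x hM.eigenvectorBasis, Finset.mul_sum]
  refine Finset.sum_le_sum fun j _ => ?_
  by_cases hj : j ∈ S
  · exact mul_le_mul_of_nonneg_right (ha j hj) (sq_nonneg _)
  · rw [repr_eq_zero_of_mem_span hM.eigenvectorBasis S x hx j hj]; simp

lemma quad_upper (M : Matrix (Fin N) (Fin N) ℝ) (hM : M.IsHermitian) (S : Set (Fin N)) (a : ℝ)
    (x : EuclideanSpace ℝ (Fin N)) (hx : x ∈ Submodule.span ℝ (⇑hM.eigenvectorBasis '' S))
    (ha : ∀ j ∈ S, hM.eigenvalues j ≤ a) (ha0 : 0 ≤ a) :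
    ⟪x, Matrix.toEuclideanLin M x⟫ ≤ a * ‖x‖^2 := by
  rw [quad_expand M hM x, norm_sq_expand x hM.eigenvectorBasis, Finset.mul_sum]
  refine Finset.sum_le_sum fun j _ => ?_
  by_cases hj : j ∈ S
  · exact mul_le_mul_of_nonneg_right (ha j hj) (sq_nonneg _)
  · rw [repr_eq_zero_of_mem_span hM.eigenvectorBasis S x hx j hj]; simp

lemma card_ge_subtype (i : Fin N) : Fintype.card {j : Fin N // i ≤ j} = N - i.val := by
  have e : {j : Fin N // i ≤ j} ≃ Fin (N - i.val) :=
    { toFun := fun j => ⟨j.1.val - i.val, by omega⟩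
      invFun := fun t => ⟨⟨i.val + t.val, by omega⟩, by
        simp [Fin.le_def]⟩
      left_inv := fun j => by
        ext
        simp only []
        have := j.2
        rw [Fin.le_def] at this
        omega
      right_inv := fun t => by
        ext
        simp }
  rw [Fintype.card_congr e, Fintype.card_fin]

lemma card_le_subtype (i : Fin N) : Fintype.card {j : Fin N // j ≤ i} = i.val + 1 := by
  have e : {j : Fin N // j ≤ i} ≃ Fin (i.val + 1) :=
    { toFun := fun j => ⟨j.1.val, by have := j.2; rw [Fin.le_def] at this; omega⟩
      invFun := fun t => ⟨⟨t.val, by omega⟩, by rw [Fin.le_def]; simp; omega⟩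
      left_inv := fun j => by ext; simp
      right_inv := fun t => by ext; simp }
  rw [Fintype.card_congr e, Fintype.card_fin]

lemma inner_eq_dot (x y : EuclideanSpace ℝ (Fin N)) :
    ⟪x, y⟫ = (WithLp.equiv 2 (Fin N → ℝ) x) ⬝ᵥ (WithLp.equiv 2 (Fin N → ℝ) y) := by
  simp [PiLp.inner_apply, RCLike.inner_apply, dotProduct, mul_comm]

lemma key_eigen (M C : Matrix (Fin N) (Fin N) ℝ) (hM : M.PosSemidef)
    (hC : ∀ x : EuclideanSpace ℝ (Fin N), ‖Matrix.toEuclideanLin C x‖ ≤ ‖x‖)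
    (hM' : (Cᵀ * M * C).IsHermitian) (i : Fin N) :
    (hM'.eigenvalues ∘ Tuple.sort hM'.eigenvalues) i
      ≤ (hM.1.eigenvalues ∘ Tuple.sort hM.1.eigenvalues) i := by
  classical
  set lam' := hM'.eigenvalues with hlam'
  set lam := hM.1.eigenvalues with hlam
  set s' := Tuple.sort lam'
  set s := Tuple.sort lam
  set u := hM'.eigenvectorBasis
  set v := hM.1.eigenvectorBasis
  set S₁ : Set (Fin N) := ⇑s' '' {j | i ≤ j} with hS₁
  set S₂ : Set (Fin N) := ⇑s '' {j | j ≤ i} with hS₂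
  set V := Submodule.span ℝ (⇑u '' S₁) with hV
  set W := Submodule.span ℝ (⇑v '' S₂) with hW
  set f := Matrix.toEuclideanLin C with hf
  set W' := W.comap f with hW'
  have hdimE : Module.finrank ℝ (EuclideanSpace ℝ (Fin N)) = N := by
    simp [finrank_euclideanSpace]
  -- dim V
  have hVrange : ⇑u '' S₁ = Set.range (fun j : {j : Fin N // i ≤ j} => u (s' j.1)) := by
    ext y
    simp only [hS₁, Set.mem_image, Set.mem_range, Set.mem_setOf_eq]
    constructor
    · rintro ⟨z, ⟨j, hj, rfl⟩, rfl⟩; exact ⟨⟨j, hj⟩, rfl⟩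
    · rintro ⟨⟨j, hj⟩, rfl⟩; exact ⟨s' j, ⟨j, hj, rfl⟩, rfl⟩
  have hUon : Orthonormal ℝ (fun j : {j : Fin N // i ≤ j} => u (s' j.1)) :=
    u.orthonormal.comp _ ((s'.injective).comp Subtype.val_injective)
  have hdimV : Module.finrank ℝ V = N - i.val := by
    rw [hV, hVrange, finrank_span_eq_card hUon.linearIndependent, card_ge_subtype]
  -- dim W
  have hWrange : ⇑v '' S₂ = Set.range (fun j : {j : Fin N // j ≤ i} => v (s j.1)) := by
    ext y
    simp only [hS₂, Set.mem_image, Set.mem_range, Set.mem_setOf_eq]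
    constructor
    · rintro ⟨z, ⟨j, hj, rfl⟩, rfl⟩; exact ⟨⟨j, hj⟩, rfl⟩
    · rintro ⟨⟨j, hj⟩, rfl⟩; exact ⟨s j, ⟨j, hj, rfl⟩, rfl⟩
  have hVon : Orthonormal ℝ (fun j : {j : Fin N // j ≤ i} => v (s j.1)) :=
    v.orthonormal.comp _ ((s.injective).comp Subtype.val_injective)
  have hdimW : Module.finrank ℝ W = i.val + 1 := by
    rw [hW, hWrange, finrank_span_eq_card hVon.linearIndependent, card_le_subtype]
  -- dim W'
  have hdimW' : i.val + 1 ≤ Module.finrank ℝ W' := by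
    set g := W.mkQ.comp f with hg
    have hker : LinearMap.ker g = W' := by
      rw [hg, LinearMap.ker_comp, Submodule.ker_mkQ]
    have hrn := LinearMap.finrank_range_add_finrank_ker g
    have hquot := Submodule.finrank_quotient_add_finrank W
    have hrle : Module.finrank ℝ (LinearMap.range g) ≤ Module.finrank ℝ (EuclideanSpace ℝ (Fin N) ⧸ W) :=
      Submodule.finrank_le _
    rw [hker] at hrn
    rw [hdimE] at hrn hquot
    omega
  -- nontrivial intersection
  have hsum := Submodule.finrank_sup_add_finrank_inf_eq V W'
  have hsuple : Module.finrank ℝ (V ⊔ W' : Submodule ℝ (EuclideanSpace ℝ (Fin N))) ≤ N := by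
    simpa [hdimE] using Submodule.finrank_le (V ⊔ W')
  have hiN : i.val < N := i.2
  have hinf : (V ⊓ W' : Submodule ℝ (EuclideanSpace ℝ (Fin N))) ≠ ⊥ := by
    intro hbot
    rw [hbot, finrank_bot] at hsum
    omega
  obtain ⟨x, hx, hx0⟩ := Submodule.exists_mem_ne_zero_of_ne_bot hinf
  have hxV : x ∈ V := hx.1
  have hxW' : x ∈ W' := hx.2
  -- lower bound
  have hmono' := Tuple.monotone_sort lam'
  have hmono := Tuple.monotone_sort lam
  have h1 : lam' (s' i) * ‖x‖^2 ≤ ⟪x, Matrix.toEuclideanLin (Cᵀ * M * C) x⟫ := by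
    refine quad_lower _ hM' S₁ _ x hxV ?_
    rintro j ⟨j₀, hj₀, rfl⟩
    exact hmono' hj₀
  -- transfer
  have h2 : ⟪x, Matrix.toEuclideanLin (Cᵀ * M * C) x⟫ = ⟪f x, Matrix.toEuclideanLin M (f x)⟫ := by
    rw [inner_eq_dot, inner_eq_dot, hf]
    simp only [Matrix.toEuclideanLin_apply, Equiv.apply_symm_apply, WithLp.equiv_apply, WithLp.ofLp_toLp]
    rw [← Matrix.mulVec_mulVec, ← Matrix.mulVec_mulVec]
    rw [Matrix.dotProduct_mulVec _ Cᵀ, Matrix.vecMul_transpose]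
  -- upper bound
  have hfxW : f x ∈ W := hxW'
  have h3 : ⟪f x, Matrix.toEuclideanLin M (f x)⟫ ≤ lam (s i) * ‖f x‖^2 := by
    refine quad_upper _ hM.1 S₂ _ (f x) hfxW ?_ (hM.eigenvalues_nonneg _)
    rintro j ⟨j₀, hj₀, rfl⟩
    exact hmono hj₀
  have h4 : lam (s i) * ‖f x‖^2 ≤ lam (s i) * ‖x‖^2 := by
    refine mul_le_mul_of_nonneg_left ?_ (hM.eigenvalues_nonneg _)
    have := hC x
    exact pow_le_pow_left₀ (norm_nonneg _) this 2
  have hxpos : 0 < ‖x‖^2 := pow_pos (norm_pos_iff.mpr hx0) 2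
  have := le_trans (le_trans h1 (le_of_eq h2)) (le_trans h3 h4)
  exact le_of_mul_le_mul_right (by simpa [mul_comm] using this) hxpos


noncomputable def sSV (N : ℕ) (A : Matrix (Fin N) (Fin N) ℝ) : Fin N → ℝ :=
  singularValues N A ∘ Tuple.sort (singularValues N A)

lemma eigenvalues_congr {M₁ M₂ : Matrix (Fin N) (Fin N) ℝ} (h : M₁ = M₂)
    (h₁ : M₁.IsHermitian) (h₂ : M₂.IsHermitian) : h₁.eigenvalues = h₂.eigenvalues := by
  subst h; rfl

lemma sv_nonneg (A : Matrix (Fin N) (Fin N) ℝ) (i : Fin N) : 0 ≤ singularValues N A i :=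
  Real.sqrt_nonneg _

lemma sSV_nonneg (A : Matrix (Fin N) (Fin N) ℝ) (i : Fin N) : 0 ≤ sSV N A i :=
  Real.sqrt_nonneg _

lemma sSV_mono (A : Matrix (Fin N) (Fin N) ℝ) : Monotone (sSV N A) :=
  Tuple.monotone_sort _

lemma sSV_eq_sqrt_sorted_eig (A : Matrix (Fin N) (Fin N) ℝ) :
    sSV N A = Real.sqrt ∘ ((Matrix.isHermitian_conjTranspose_mul_self A).eigenvalues
      ∘ Tuple.sort (Matrix.isHermitian_conjTranspose_mul_self A).eigenvalues) := by
  set g := (Matrix.isHermitian_conjTranspose_mul_self A).eigenvalues with hg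
  have h1 : singularValues N A = Real.sqrt ∘ g := rfl
  have hmono : Monotone ((Real.sqrt ∘ g) ∘ Tuple.sort g) := by
    intro a b hab
    exact Real.sqrt_le_sqrt (Tuple.monotone_sort g hab)
  have := Tuple.comp_sort_eq_comp_iff_monotone (f := Real.sqrt ∘ g) (σ := Tuple.sort g) |>.2 hmono
  rw [sSV, h1, ← this]
  rfl

lemma sum_sv_sorted (A : Matrix (Fin N) (Fin N) ℝ) (f : ℝ → ℝ) :
    ∑ j, f (singularValues N A j) = ∑ j, f (sSV N A j) :=
  (Equiv.sum_comp (Tuple.sort (singularValues N A)) fun j => f (singularValues N A j)).symm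

/-- Key comparison: sorted singular values of `A * diagonal d` are dominated by those of `A`,
whenever `d` is a 0/1 vector. -/
lemma sSV_mul_diagonal_le (A : Matrix (Fin N) (Fin N) ℝ) (d : Fin N → ℝ)
    (hd : ∀ j, d j = 0 ∨ d j = 1) (i : Fin N) :
    sSV N (A * Matrix.diagonal d) i ≤ sSV N A i := by
  classical
  set C := Matrix.diagonal d with hCdef
  have hM : (Aᴴ * A).PosSemidef := Matrix.posSemidef_conjTranspose_mul_self A
  have hC : ∀ x : EuclideanSpace ℝ (Fin N), ‖Matrix.toEuclideanLin C x‖ ≤ ‖x‖ := by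
    intro x
    rw [Matrix.toEuclideanLin_apply]
    rw [EuclideanSpace.norm_eq, EuclideanSpace.norm_eq]
    apply Real.sqrt_le_sqrt
    apply Finset.sum_le_sum
    intro j _
    simp only [hCdef, PiLp.toLp_apply, Matrix.mulVec_diagonal]
    rcases hd j with h | h
    · simp only [h, zero_mul, norm_zero]
      have : (0:ℝ) ^ 2 = 0 := by norm_num
      rw [this]
      positivity
    · simp only [h, one_mul]
      rfl
  have hM' : (Cᵀ * (Aᴴ * A) * C).IsHermitian := by
    have := (hM.conjTranspose_mul_mul_same C).1
    rwa [Matrix.conjTranspose_eq_transpose_of_trivial] at this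
  have hkey := key_eigen (Aᴴ * A) C hM hC hM' i
  -- transport to (A*C)ᴴ(A*C)
  have heq : Cᵀ * (Aᴴ * A) * C = (A * C)ᴴ * (A * C) := by
    rw [Matrix.conjTranspose_mul]
    rw [← Matrix.conjTranspose_eq_transpose_of_trivial C]
    noncomm_ring
  have hcongr := eigenvalues_congr heq hM' (Matrix.isHermitian_conjTranspose_mul_self (A * C))
  rw [hcongr] at hkey
  have h1 := congrFun (sSV_eq_sqrt_sorted_eig (A * C)) i
  have h2 := congrFun (sSV_eq_sqrt_sorted_eig A) i
  rw [h1, h2]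
  exact Real.sqrt_le_sqrt hkey

lemma card_sv_support_le (A : Matrix (Fin N) (Fin N) ℝ) (d : Fin N → ℝ) (m : ℕ)
    (hm : Fintype.card {j : Fin N // d j ≠ 0} ≤ m) :
    (Finset.univ.filter (fun i => singularValues N (A * Matrix.diagonal d) i ≠ 0)).card ≤ m := by
  classical
  set B := A * Matrix.diagonal d with hB
  have heig : ∀ i, (singularValues N B i ≠ 0)
      ↔ (Matrix.isHermitian_conjTranspose_mul_self B).eigenvalues i ≠ 0 := by
    intro i
    rw [singularValues]
    constructor
    · intro h h0; exact h (Real.sqrt_eq_zero'.mpr (le_of_eq h0))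
    · intro h hs
      rw [Real.sqrt_eq_zero' ] at hs
      exact h (le_antisymm hs (Matrix.eigenvalues_conjTranspose_mul_self_nonneg B i))
  have h1 : (Finset.univ.filter (fun i => singularValues N B i ≠ 0)).card
      = Fintype.card {i // (Matrix.isHermitian_conjTranspose_mul_self B).eigenvalues i ≠ 0} := by
    rw [Fintype.card_subtype]
    apply Finset.card_bij (fun i _ => i) <;> simp_all [heig]
  rw [h1, ← Matrix.IsHermitian.rank_eq_card_non_zero_eigs]
  calc (Bᴴ * B).rank ≤ B.rank := Matrix.rank_mul_le_right _ _
    _ ≤ (Matrix.diagonal d).rank := Matrix.rank_mul_le_right _ _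
    _ = Fintype.card {j // d j ≠ 0} := Matrix.rank_diagonal d
    _ ≤ m := hm

lemma sum_le_card_rpow {ι : Type*} (s : Finset ι) (g : ι → ℝ) (hg : ∀ i ∈ s, 0 ≤ g i)
    (t : ℝ) (ht : 1 ≤ t) :
    ∑ i ∈ s, g i ≤ (s.card : ℝ) ^ (1 - 1/t) * (∑ i ∈ s, g i ^ t) ^ (1/t) := by
  rcases s.eq_empty_or_nonempty with h | h
  · subst h; simp only [Finset.sum_empty, Finset.card_empty, Nat.cast_zero]
    positivity
  have ht0 : (0:ℝ) < t := lt_of_lt_of_le one_pos ht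
  have hc : (0:ℝ) < s.card := by
    exact_mod_cast Finset.card_pos.mpr h
  set c : ℝ := (s.card : ℝ) with hcdef
  have hjensen := Real.rpow_arith_mean_le_arith_mean_rpow s (fun _ => 1/c) g
    (fun i _ => by positivity)
    (by rw [Finset.sum_const, nsmul_eq_mul]; field_simp; rfl)
    hg ht
  simp only [one_div, smul_eq_mul] at hjensen
  rw [← Finset.mul_sum, ← Finset.mul_sum] at hjensen
  have hX : (0:ℝ) ≤ c⁻¹ * ∑ i ∈ s, g i := by
    have : (0:ℝ) ≤ ∑ i ∈ s, g i := Finset.sum_nonneg hg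
    positivity
  have h2 : c⁻¹ * ∑ i ∈ s, g i ≤ (c⁻¹ * ∑ i ∈ s, g i ^ t) ^ (1/t) := by
    have := Real.rpow_le_rpow (by positivity) hjensen (by positivity : (0:ℝ) ≤ 1/t)
    rwa [← Real.rpow_mul hX, mul_one_div, div_self (ne_of_gt ht0), Real.rpow_one] at this
  have h3 : ∑ i ∈ s, g i = c * (c⁻¹ * ∑ i ∈ s, g i) := by
    field_simp
  rw [h3]
  calc c * (c⁻¹ * ∑ i ∈ s, g i) ≤ c * (c⁻¹ * ∑ i ∈ s, g i ^ t) ^ (1/t) :=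
        mul_le_mul_of_nonneg_left h2 (le_of_lt hc)
    _ = c ^ (1 - 1/t) * (∑ i ∈ s, g i ^ t) ^ (1/t) := by
        rw [Real.mul_rpow (inv_nonneg.mpr (le_of_lt hc)) (Finset.sum_nonneg fun i hi => by
          exact Real.rpow_nonneg (hg i hi) t)]
        rw [Real.inv_rpow (le_of_lt hc), Real.rpow_sub hc, Real.rpow_one]
        field_simp


lemma schattenNorm_nonneg (p : ℝ≥0∞) (A : Matrix (Fin N) (Fin N) ℝ) :
    0 ≤ schattenNorm N p A := by
  rw [schattenNorm]
  split
  · exact Real.iSup_nonneg (sv_nonneg A)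
  · exact Real.rpow_nonneg (Finset.sum_nonneg fun i _ => Real.rpow_nonneg (sv_nonneg A i) _) _

lemma sv_le_iSup (A : Matrix (Fin N) (Fin N) ℝ) (j : Fin N) :
    singularValues N A j ≤ ⨆ i, singularValues N A i :=
  le_ciSup (Set.Finite.bddAbove (Set.finite_range _)) j

lemma sv_pt_le (hN : 0 < N) (A : Matrix (Fin N) (Fin N) ℝ) (d : Fin N → ℝ)
    (hd : ∀ j, d j = 0 ∨ d j = 1) (j : Fin N) :
    singularValues N (A * Matrix.diagonal d) j ≤ ⨆ i, singularValues N A i := by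
  set B := A * Matrix.diagonal d with hB
  have hlast : ∀ i : Fin N, i ≤ ⟨N - 1, by omega⟩ := fun i => by
    rw [Fin.le_def]; simp; omega
  have h1 : singularValues N B j = sSV N B ((Tuple.sort (singularValues N B))⁻¹ j) := by
    rw [sSV]; simp
  rw [h1]
  calc sSV N B _ ≤ sSV N B ⟨N-1, by omega⟩ := sSV_mono B (hlast _)
    _ ≤ sSV N A ⟨N-1, by omega⟩ := sSV_mul_diagonal_le A d hd _
    _ ≤ ⨆ i, singularValues N A i := sv_le_iSup A (Tuple.sort (singularValues N A) ⟨N-1, by omega⟩)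

lemma core (hN : 0 < N) (p q : ℝ≥0∞) (hq : 0 < q) (hqp : q ≤ p)
    (A : Matrix (Fin N) (Fin N) ℝ) (d : Fin N → ℝ) (hd : ∀ j, d j = 0 ∨ d j = 1)
    (m : ℕ) (hm1 : 1 ≤ m) (hm : Fintype.card {j : Fin N // d j ≠ 0} ≤ m) :
    schattenNorm N q (A * Matrix.diagonal d)
      ≤ (m:ℝ) ^ (1/q.toReal - 1/p.toReal) * schattenNorm N p A := by
  classical
  have hne : Nonempty (Fin N) := ⟨⟨0, hN⟩⟩
  set B := A * Matrix.diagonal d with hB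
  by_cases hqt : q = ⊤
  · have hpt : p = ⊤ := top_le_iff.mp (hqt ▸ hqp)
    subst hqt hpt
    rw [sub_self, Real.rpow_zero, one_mul]
    unfold schattenNorm
    rw [if_pos rfl, if_pos rfl]
    exact ciSup_le (sv_pt_le hN A d hd)
  · have hne : Nonempty (Fin N) := ⟨⟨0, hN⟩⟩
    have hq0 : 0 < q.toReal := ENNReal.toReal_pos (ne_of_gt hq) hqt
    set qr := q.toReal with hqr
    have hm0 : (0:ℝ) < (m:ℝ) := by exact_mod_cast hm1
    set s := Finset.univ.filter (fun i => singularValues N B i ≠ 0) with hs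
    have hcard : s.card ≤ m := card_sv_support_le A d m hm
    have hsum_eq : ∑ i, singularValues N B i ^ qr = ∑ i ∈ s, singularValues N B i ^ qr := by
      refine (Finset.sum_subset (Finset.filter_subset _ _) ?_).symm
      intro i _ hi
      simp only [hs, Finset.mem_filter, Finset.mem_univ, true_and, not_not] at hi
      rw [hi, Real.zero_rpow (ne_of_gt hq0)]
    have hqnorm : schattenNorm N q B = (∑ i ∈ s, singularValues N B i ^ qr) ^ (1/qr) := by
      rw [schattenNorm, if_neg hqt, hsum_eq]
    by_cases hpt : p = ⊤
    · subst hpt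
      set c := ⨆ i, singularValues N A i with hc
      have hc0 : 0 ≤ c := Real.iSup_nonneg (sv_nonneg A)
      have hbound : ∑ i ∈ s, singularValues N B i ^ qr ≤ (m:ℝ) * c ^ qr := by
        calc ∑ i ∈ s, singularValues N B i ^ qr ≤ ∑ _i ∈ s, c ^ qr := by
              refine Finset.sum_le_sum fun i _ => ?_
              exact Real.rpow_le_rpow (sv_nonneg B i) (sv_pt_le hN A d hd i) (le_of_lt hq0)
          _ = s.card * c ^ qr := by rw [Finset.sum_const, nsmul_eq_mul]
          _ ≤ (m:ℝ) * c ^ qr := by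
              refine mul_le_mul_of_nonneg_right ?_ (Real.rpow_nonneg hc0 _)
              exact_mod_cast hcard
      have h2 : schattenNorm N q B ≤ ((m:ℝ) * c ^ qr) ^ (1/qr) := by
        rw [hqnorm]
        refine Real.rpow_le_rpow (Finset.sum_nonneg fun i _ => Real.rpow_nonneg (sv_nonneg B i) _)
          hbound (by positivity)
      rw [Real.mul_rpow (le_of_lt hm0) (Real.rpow_nonneg hc0 _), ← Real.rpow_mul hc0,
        mul_one_div, div_self (ne_of_gt hq0), Real.rpow_one] at h2
      have hAnorm : schattenNorm N ⊤ A = c := by unfold schattenNorm; rw [if_pos rfl]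
      rw [hAnorm, ENNReal.toReal_top, div_zero, sub_zero]
      exact h2
    · -- both finite
      have hp0 : 0 < p.toReal := ENNReal.toReal_pos (ne_of_gt (lt_of_lt_of_le hq hqp)) hpt
      set pr := p.toReal with hpr
      have hqp' : qr ≤ pr := ENNReal.toReal_mono hpt hqp
      set t := pr / qr with htdef
      have ht : 1 ≤ t := (one_le_div (by positivity)).mpr hqp'
      have ht0 : 0 < t := lt_of_lt_of_le one_pos ht
      have hjensen := sum_le_card_rpow s (fun i => singularValues N B i ^ qr)
        (fun i _ => Real.rpow_nonneg (sv_nonneg B i) _) t ht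
      have hpow : ∀ i, (singularValues N B i ^ qr) ^ t = singularValues N B i ^ pr := by
        intro i
        rw [← Real.rpow_mul (sv_nonneg B i)]
        congr 1
        rw [htdef, mul_comm, div_mul_cancel₀ _ (ne_of_gt hq0)]
      simp only [hpow] at hjensen
      have hsumB_le : ∑ i ∈ s, singularValues N B i ^ pr ≤ ∑ i, singularValues N A i ^ pr := by
        calc ∑ i ∈ s, singularValues N B i ^ pr ≤ ∑ i, singularValues N B i ^ pr :=
              Finset.sum_le_sum_of_subset_of_nonneg (Finset.filter_subset _ _)
                (fun i _ _ => Real.rpow_nonneg (sv_nonneg B i) _)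
          _ = ∑ i, sSV N B i ^ pr := sum_sv_sorted B (fun x => x ^ pr)
          _ ≤ ∑ i, sSV N A i ^ pr := Finset.sum_le_sum fun i _ =>
              Real.rpow_le_rpow (sSV_nonneg B i) (sSV_mul_diagonal_le A d hd i) (le_of_lt hp0)
          _ = ∑ i, singularValues N A i ^ pr := (sum_sv_sorted A (fun x => x ^ pr)).symm
      set X := ∑ i, singularValues N A i ^ pr with hX
      have hX0 : 0 ≤ X := Finset.sum_nonneg fun i _ => Real.rpow_nonneg (sv_nonneg A i) _
      have hstep : ∑ i ∈ s, singularValues N B i ^ qr ≤ (m:ℝ) ^ (1 - 1/t) * X ^ (1/t) := by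
        refine le_trans hjensen ?_
        refine mul_le_mul ?_ ?_ (Real.rpow_nonneg (Finset.sum_nonneg fun i _ =>
          Real.rpow_nonneg (sv_nonneg B i) _) _) (Real.rpow_nonneg (le_of_lt hm0) _)
        · exact Real.rpow_le_rpow (Nat.cast_nonneg _) (by exact_mod_cast hcard)
            (by rw [sub_nonneg, div_le_one ht0]; exact ht)
        · exact Real.rpow_le_rpow (Finset.sum_nonneg fun i _ =>
            Real.rpow_nonneg (sv_nonneg B i) _) hsumB_le (by positivity)
      have hfinal : schattenNorm N q B ≤ ((m:ℝ) ^ (1 - 1/t) * X ^ (1/t)) ^ (1/qr) := by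
        rw [hqnorm]
        exact Real.rpow_le_rpow (Finset.sum_nonneg fun i _ =>
          Real.rpow_nonneg (sv_nonneg B i) _) hstep (by positivity)
      have hrw : ((m:ℝ) ^ (1 - 1/t) * X ^ (1/t)) ^ (1/qr)
          = (m:ℝ) ^ (1/qr - 1/pr) * X ^ (1/pr) := by
        rw [Real.mul_rpow (Real.rpow_nonneg (le_of_lt hm0) _) (Real.rpow_nonneg hX0 _),
          ← Real.rpow_mul (le_of_lt hm0), ← Real.rpow_mul hX0]
        have hinv : 1 / t = qr / pr := by rw [htdef, one_div_div]
        have he2 : (1/t) * (1/qr) = 1/pr := by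
          rw [hinv, mul_one_div, div_div, mul_comm pr qr, ← div_div, div_self (ne_of_gt hq0)]
        have he1 : (1 - 1/t) * (1/qr) = 1/qr - 1/pr := by
          rw [sub_mul, one_mul, he2]
        rw [he1, he2]
      rw [hrw] at hfinal
      have : schattenNorm N p A = X ^ (1/pr) := by rw [schattenNorm, if_neg hpt]
      rw [this]
      exact hfinal


lemma nat_arith (N n : ℕ) (h1 : 1 ≤ n) (h2 : n ≤ N ^ 2) :
    ((N ^ 2 - n + 1) + N - 1) / N = N - (n - 1) / N := by
  have hN : 0 < N := by
    rcases Nat.eq_zero_or_pos N with h | h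
    · subst h; simp at h2; omega
    · exact h
  set a := n - 1 with ha
  set q := a / N with hq
  set r := a % N with hr
  have hdm : N * q + r = a := Nat.div_add_mod a N
  have hrN : r < N := Nat.mod_lt _ hN
  have hsq : N ^ 2 = N * N := pow_two N
  have haqN : q ≤ N - 1 := by
    have : a < N * N := by omega
    have := (Nat.div_lt_iff_lt_mul hN).mpr (by omega : a < N * N)
    omega
  have hu : N * q ≤ N * (N - 1) := Nat.mul_le_mul_left N haqN
  have h5 : N * (N - 1) = N * N - N := by rw [Nat.mul_sub, mul_one]
  have key : (N ^ 2 - n + 1) + N - 1 = N * (N - q) + (N - 1 - r) := by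
    have h6 : N * (N - q) = N * N - N * q := by rw [Nat.mul_sub]
    omega
  rw [key, Nat.mul_add_div hN, Nat.div_eq_of_lt (by omega), add_zero]

lemma card_d_compl (k : ℕ) (hk : k < N) :
    Fintype.card {j : Fin N // (if (j : ℕ) < k then (0:ℝ) else 1) ≠ 0} = N - k := by
  have e : {j : Fin N // (if (j : ℕ) < k then (0:ℝ) else 1) ≠ 0}
      ≃ {j : Fin N // (⟨k, hk⟩ : Fin N) ≤ j} := by
    apply Equiv.subtypeEquivRight
    intro j
    rw [Fin.le_def]
    constructor
    · intro h
      by_contra hc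
      simp only [not_le] at hc
      rw [if_pos hc] at h
      exact h rfl
    · intro h
      have hkj : k ≤ (j:ℕ) := by simpa using h
      rw [if_neg (by omega)]
      exact one_ne_zero
  rw [Fintype.card_congr e, card_ge_subtype]

lemma finrank_range_mulRight_le (k : ℕ) (hk : k ≤ N) :
    Module.finrank ℝ (LinearMap.range (LinearMap.mulRight ℝ
      (Matrix.diagonal (fun j : Fin N => if (j:ℕ) < k then (1:ℝ) else 0)) :
      Matrix (Fin N) (Fin N) ℝ →ₗ[ℝ] Matrix (Fin N) (Fin N) ℝ)) ≤ N * k := by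
  classical
  set K := Matrix.diagonal (fun j : Fin N => if (j:ℕ) < k then (1:ℝ) else 0) with hK
  set g : Fin N × Fin k → Matrix (Fin N) (Fin N) ℝ :=
    fun ij => Matrix.single ij.1 (Fin.castLE hk ij.2) 1 with hg
  have hsub : LinearMap.range (LinearMap.mulRight ℝ K :
      Matrix (Fin N) (Fin N) ℝ →ₗ[ℝ] Matrix (Fin N) (Fin N) ℝ)
      ≤ Submodule.span ℝ (Set.range g) := by
    rintro X ⟨A, rfl⟩
    have hAK : (LinearMap.mulRight ℝ K) A
        = ∑ ij : Fin N × Fin k, (A ij.1 (Fin.castLE hk ij.2)) • g ij := by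
      rw [LinearMap.mulRight_apply]
      ext i j
      rw [Matrix.mul_diagonal, Matrix.sum_apply]
      by_cases hj : (j : ℕ) < k
      · rw [if_pos hj, mul_one]
        rw [Finset.sum_eq_single (⟨i, ⟨(j:ℕ), hj⟩⟩ : Fin N × Fin k)]
        · simp [hg, Matrix.single, Fin.ext_iff]
        · rintro ⟨i₀, j₀⟩ _ hne
          simp only [hg, Matrix.smul_apply, Matrix.single, Matrix.of_apply]
          rw [if_neg, smul_zero]
          rintro ⟨rfl, hc⟩
          apply hne
          have hval : (j₀ : ℕ) = (j : ℕ) := by simpa using congrArg Fin.val hc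
          exact Prod.ext rfl (Fin.ext (by simpa using hval))
        · intro h; exact absurd (Finset.mem_univ _) h
      · rw [if_neg hj, mul_zero]
        refine (Finset.sum_eq_zero ?_).symm
        rintro ⟨i₀, j₀⟩ _
        simp only [hg, Matrix.smul_apply, Matrix.single, Matrix.of_apply]
        rw [if_neg, smul_zero]
        rintro ⟨rfl, hc⟩
        apply hj
        rw [← hc]
        simpa using j₀.2
    rw [hAK]
    exact Submodule.sum_mem _ fun ij _ =>
      Submodule.smul_mem _ _ (Submodule.subset_span ⟨ij, rfl⟩)
  have h1 := Submodule.finrank_mono hsub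
  have h2 : Module.finrank ℝ (Submodule.span ℝ (Set.range g)) ≤ N * k := by
    refine le_trans (finrank_span_le_card (Set.range g)) ?_
    rw [Set.toFinset_range]
    calc (Finset.univ.image g).card ≤ Finset.univ.card := Finset.card_image_le
      _ = N * k := by simp
  exact le_trans h1 h2

lemma part1 (p q : ℝ≥0∞) (hq : 0 < q) (hqp : q ≤ p) (N n : ℕ) (h1 : 1 ≤ n) (h2 : n ≤ N ^ 2) :
    approxNumber N p q n
      ≤ ((((N ^ 2 - n + 1) + N - 1) / N : ℕ) : ℝ) ^ (1 / q.toReal - 1 / p.toReal) := by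
  classical
  have hN : 0 < N := by
    rcases Nat.eq_zero_or_pos N with h | h
    · subst h; simp at h2; omega
    · exact h
  have hsq : N ^ 2 = N * N := pow_two N
  set k := (n - 1) / N with hk
  have hkN : k < N := by
    rw [hk, Nat.div_lt_iff_lt_mul hN]
    omega
  set dk : Fin N → ℝ := fun j => if (j:ℕ) < k then (1:ℝ) else 0 with hdk
  set d : Fin N → ℝ := fun j => if (j:ℕ) < k then (0:ℝ) else 1 with hd
  set K := Matrix.diagonal dk with hK
  set T : Matrix (Fin N) (Fin N) ℝ →ₗ[ℝ] Matrix (Fin N) (Fin N) ℝ := LinearMap.mulRight ℝ K with hT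
  have harith : ((N ^ 2 - n + 1) + N - 1) / N = N - k := nat_arith N n h1 h2
  set m := N - k with hm
  have hm1 : 1 ≤ m := by omega
  have hrank : Module.finrank ℝ (LinearMap.range T) < n := by
    refine lt_of_le_of_lt (le_trans (finrank_range_mulRight_le k (le_of_lt hkN)) ?_)
      (by omega : n - 1 < n)
    rw [mul_comm]
    exact Nat.div_mul_le_self _ _
  set e := 1 / q.toReal - 1 / p.toReal with he
  set SS := {s : ℝ | ∃ A, schattenNorm N p A ≤ 1 ∧ s = schattenNorm N q (A - T A)} with hSS
  have hbdd : BddBelow {r : ℝ | ∃ T' : Matrix (Fin N) (Fin N) ℝ →ₗ[ℝ] Matrix (Fin N) (Fin N) ℝ,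
      Module.finrank ℝ (LinearMap.range T') < n ∧
      r = sSup {s : ℝ | ∃ A, schattenNorm N p A ≤ 1 ∧ s = schattenNorm N q (A - T' A)}} := by
    refine ⟨0, ?_⟩
    rintro r ⟨T', _, rfl⟩
    refine Real.sSup_nonneg ?_
    rintro s ⟨A, _, rfl⟩
    exact schattenNorm_nonneg _ _
  have hmem : sSup SS ∈ {r : ℝ | ∃ T' : Matrix (Fin N) (Fin N) ℝ →ₗ[ℝ] Matrix (Fin N) (Fin N) ℝ,
      Module.finrank ℝ (LinearMap.range T') < n ∧
      r = sSup {s : ℝ | ∃ A, schattenNorm N p A ≤ 1 ∧ s = schattenNorm N q (A - T' A)}} :=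
    ⟨T, hrank, rfl⟩
  rw [approxNumber, harith]
  refine csInf_le_of_le hbdd hmem ?_
  refine Real.sSup_le ?_ (Real.rpow_nonneg (Nat.cast_nonneg _) _)
  rintro s ⟨A, hA, rfl⟩
  have hsub : A - T A = A * Matrix.diagonal d := by
    have hone : K + Matrix.diagonal d = 1 := by
      rw [hK, Matrix.diagonal_add]
      rw [show (fun i => dk i + d i) = fun _ => (1:ℝ) from funext fun j => by
        by_cases hj : (j:ℕ) < k <;> simp [hdk, hd, Pi.add_apply, hj]]
      exact Matrix.diagonal_one
    calc A - T A = A * 1 - A * K := by rw [mul_one, hT, LinearMap.mulRight_apply]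
      _ = A * (1 - K) := by rw [mul_sub]
      _ = A * Matrix.diagonal d := by rw [← hone, add_sub_cancel_left]
  rw [hsub]
  have hcard : Fintype.card {j : Fin N // d j ≠ 0} ≤ m := le_of_eq (card_d_compl k hkN)
  have hd01 : ∀ j, d j = 0 ∨ d j = 1 := fun j => by
    by_cases hj : (j:ℕ) < k <;> simp [hd, hj]
  calc schattenNorm N q (A * Matrix.diagonal d)
      ≤ (m:ℝ) ^ e * schattenNorm N p A := core hN p q hq hqp A d hd01 m hm1 hcard
    _ ≤ (m:ℝ) ^ e * 1 :=
        mul_le_mul_of_nonneg_left hA (Real.rpow_nonneg (Nat.cast_nonneg _) _)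
    _ = (m:ℝ) ^ e := mul_one _


end Aux

/-- **Upper bound for approximation numbers by projecting out columns:** for
`0 < q ≤ p ≤ ∞` and `1 ≤ n ≤ N²`,
`a_n(S_p^N ↪ S_q^N) ≤ ⌈(N² - n + 1)/N⌉^(1/q - 1/p)`, and in particular there is a
constant `C = C(p,q) > 0` with
`a_n(S_p^N ↪ S_q^N) ≤ C · max{1, (N² - n + 1)/N}^(1/q - 1/p)`. -/
theorem approxNumber_upper_triangle (p q : ℝ≥0∞) (hq : 0 < q) (hqp : q ≤ p) :
    (∀ N n : ℕ, 1 ≤ n → n ≤ N ^ 2 →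
      approxNumber N p q n
        ≤ ((((N ^ 2 - n + 1) + N - 1) / N : ℕ) : ℝ) ^ (1 / q.toReal - 1 / p.toReal)) ∧
    ∃ C : ℝ, 0 < C ∧ ∀ N n : ℕ, 1 ≤ n → n ≤ N ^ 2 →
      approxNumber N p q n
        ≤ C * max 1 (((N ^ 2 - n + 1 : ℕ) : ℝ) / N) ^ (1 / q.toReal - 1 / p.toReal) := by

  have he0 : 0 ≤ 1 / q.toReal - 1 / p.toReal := by
    by_cases hpt : p = ⊤
    · rw [hpt]
      simp only [ENNReal.toReal_top, div_zero, sub_zero]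
      exact one_div_nonneg.mpr ENNReal.toReal_nonneg
    · have hqt : q ≠ ⊤ := fun h => hpt (top_le_iff.mp (h ▸ hqp))
      have hq0 : 0 < q.toReal := ENNReal.toReal_pos (ne_of_gt hq) hqt
      have hle : q.toReal ≤ p.toReal := ENNReal.toReal_mono hpt hqp
      rw [sub_nonneg]
      exact one_div_le_one_div_of_le hq0 hle
  constructor
  · exact fun N n h1 h2 => part1 p q hq hqp N n h1 h2
  · set e := 1 / q.toReal - 1 / p.toReal with he
    refine ⟨2 ^ e, Real.rpow_pos_of_pos two_pos e, ?_⟩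
    intro N n h1 h2
    refine le_trans (part1 p q hq hqp N n h1 h2) ?_
    have hN : 0 < N := by
      rcases Nat.eq_zero_or_pos N with h | h
      · subst h; simp at h2; omega
      · exact h
    set x := N ^ 2 - n + 1 with hx
    have hx1 : 1 ≤ x := by omega
    have hNR : (0:ℝ) < (N:ℝ) := by exact_mod_cast hN
    have hceil : (((x + N - 1) / N : ℕ) : ℝ) ≤ 2 * max 1 ((x:ℝ)/(N:ℝ)) := by
      calc (((x + N - 1) / N : ℕ) : ℝ) ≤ ((x + N - 1 : ℕ) : ℝ) / (N:ℝ) := Nat.cast_div_le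
        _ = ((x:ℝ) + ((N:ℝ) - 1))/(N:ℝ) := by
            rw [Nat.cast_sub (by omega : 1 ≤ x + N)]
            push_cast
            ring_nf
        _ = (x:ℝ)/(N:ℝ) + ((N:ℝ) - 1)/(N:ℝ) := add_div _ _ _
        _ ≤ (x:ℝ)/(N:ℝ) + 1 := by
            refine add_le_add (le_refl _) ?_
            rw [div_le_one hNR]
            linarith
        _ ≤ max 1 ((x:ℝ)/(N:ℝ)) + max 1 ((x:ℝ)/(N:ℝ)) :=
            add_le_add (le_max_right _ _) (le_max_left _ _)
        _ = 2 * max 1 ((x:ℝ)/(N:ℝ)) := (two_mul _).symm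
    calc (((x + N - 1) / N : ℕ) : ℝ) ^ e ≤ (2 * max 1 ((x:ℝ)/(N:ℝ))) ^ e :=
          Real.rpow_le_rpow (Nat.cast_nonneg _) hceil he0
      _ = 2 ^ e * (max 1 ((x:ℝ)/(N:ℝ))) ^ e :=
          Real.mul_rpow (by norm_num) (le_trans zero_le_one (le_max_left _ _))
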